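/- Let (W,S) be a Coxeter group, w ∈ W, (s,t) ∈ 𝔐, and let reduced expressions →a, →b for w be such that →b is obtained from →a by an (s,t)-braid move, with q ∈ W such that Invs →b is obtained from Invs →a by replacing a factor q ρ_{s,t} q⁻¹ by its reversal. Set s' = qsq⁻¹, t' = qtq⁻¹. Then has_{s',t'} →a = 1 and has_{s',t'} →b = 0 (i.e., ρ_{s',t'} appears as a subword of Invs →a but not of Invs →b). -/

import Mathlib

/-- The word `(s, t, s, t, …)` with `m` letters. -/
def altList {α : Type*} (s t : α) (m : ℕ) : List α :=
  (List.range m).map (fun k => if k % 2 = 0 then s else t)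

/-- The word `ρ_{s,t} = ((st)^0 s, (st)^1 s, …, (st)^{m-1} s)`. -/
def rhoWord {W : Type*} [Group W] (s t : W) (m : ℕ) : List W :=
  (List.range m).map (fun k => (s * t) ^ k * s)

/-- `b` is obtained from `a` by an `(s_i, s_j)`-braid move. -/
def IsBraidMove {B W : Type*} [Group W] {M : CoxeterMatrix B}
    (cs : CoxeterSystem M W) (i j : B) (a b : List B) : Prop :=
  i ≠ j ∧ M.M i j ≠ 0 ∧
  ∃ p : ℕ, p + M.M i j ≤ a.length ∧
    a = a.take p ++ altList i j (M.M i j) ++ a.drop (p + M.M i j) ∧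
    b = a.take p ++ altList j i (M.M i j) ++ a.drop (p + M.M i j)

private lemma conj_pow_aux {W : Type*} [Group W] (q x : W) (k : ℕ) :
    (q * x * q⁻¹) ^ k = q * x ^ k * q⁻¹ := by
  induction k with
  | zero => simp
  | succ n ih => rw [pow_succ, pow_succ, ih]; group

private lemma rhoWord_conj {W : Type*} [Group W] (q s t : W) (m : ℕ) :
    (rhoWord s t m).map (fun x => q * x * q⁻¹) = rhoWord (q*s*q⁻¹) (q*t*q⁻¹) m := by
  unfold rhoWord
  rw [List.map_map]
  apply List.map_congr_left
  intro k _
  simp only [Function.comp_apply]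
  have h : (q*s*q⁻¹) * (q*t*q⁻¹) = q * (s*t) * q⁻¹ := by group
  rw [h, conj_pow_aux]; group

/-- In the situation of a braid move `→a → →b` with conjugator `q`,
setting `s' = qsq⁻¹` and `t' = qtq⁻¹`, the word `ρ_{s',t'}` appears as a subword of
`Invs →a` (i.e. `has_{s',t'} →a = 1`) but not of `Invs →b` (i.e. `has_{s',t'} →b = 0`). -/
theorem has_s't'_flip {B W : Type*} [Group W] {M : CoxeterMatrix B}
    (cs : CoxeterSystem M W) (w : W) (i j : B) (hij : i ≠ j) (hfin : M.M i j ≠ 0)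
    (a b : List B)
    (ha : cs.IsReduced a) (haw : cs.wordProd a = w)
    (hb : cs.IsReduced b) (hbw : cs.wordProd b = w)
    (hmove : IsBraidMove cs i j a b)
    (q : W)
    (hrepl : ∃ X Y : List W,
      cs.leftInvSeq a = X ++ (rhoWord (cs.simple i) (cs.simple j) (M.M i j)).map
        (fun x => q * x * q⁻¹) ++ Y ∧
      cs.leftInvSeq b = X ++ ((rhoWord (cs.simple i) (cs.simple j) (M.M i j)).map
        (fun x => q * x * q⁻¹)).reverse ++ Y) :
    List.Sublist
      (rhoWord (q * cs.simple i * q⁻¹) (q * cs.simple j * q⁻¹)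
        (orderOf ((q * cs.simple i * q⁻¹) * (q * cs.simple j * q⁻¹))))
      (cs.leftInvSeq a) ∧
    ¬ List.Sublist
      (rhoWord (q * cs.simple i * q⁻¹) (q * cs.simple j * q⁻¹)
        (orderOf ((q * cs.simple i * q⁻¹) * (q * cs.simple j * q⁻¹))))
      (cs.leftInvSeq b) := by
  obtain ⟨X, Y, hA, hB⟩ := hrepl
  set m := M.M i j with hm
  set blk := (rhoWord (cs.simple i) (cs.simple j) m).map (fun x => q * x * q⁻¹) with hblk
  have hblklen : blk.length = m := by simp [hblk, rhoWord]
  have hblkget : ∀ (k : ℕ) (hk : k < blk.length),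
      blk[k] = q * ((cs.simple i * cs.simple j) ^ k * cs.simple i) * q⁻¹ := by
    intro k hk
    simp [hblk, rhoWord]
  have hblk_sub : List.Sublist blk (cs.leftInvSeq a) := by
    rw [hA]
    exact (List.sublist_append_right X blk).trans (List.sublist_append_left _ Y)
  have hblk_nodup : blk.Nodup := (ha.nodup_leftInvSeq).sublist hblk_sub
  have h1 : m ≠ 1 := M.off_diagonal i j hij
  have hm2 : 2 ≤ m := by omega
  have hpow : (cs.simple i * cs.simple j) ^ m = 1 := cs.simple_mul_simple_pow i j
  have hdvd : orderOf (cs.simple i * cs.simple j) ∣ m := orderOf_dvd_of_pow_eq_one hpow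
  have hopos : 0 < orderOf (cs.simple i * cs.simple j) :=
    (isOfFinOrder_iff_pow_eq_one.mpr ⟨m, by omega, hpow⟩).orderOf_pos
  have homem : orderOf (cs.simple i * cs.simple j) = m := by
    by_contra hne
    have holt : orderOf (cs.simple i * cs.simple j) < m :=
      lt_of_le_of_ne (Nat.le_of_dvd (by omega) hdvd) hne
    have h0 : (0 : ℕ) < blk.length := by omega
    have hol : orderOf (cs.simple i * cs.simple j) < blk.length := by omega
    have heq : blk[0]'h0 = blk[orderOf (cs.simple i * cs.simple j)]'hol := by
      rw [hblkget 0 h0, hblkget _ hol, pow_zero, pow_orderOf_eq_one]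
    have := (hblk_nodup.getElem_inj_iff).mp heq
    omega
  have hconj : (q * cs.simple i * q⁻¹) * (q * cs.simple j * q⁻¹)
      = q * (cs.simple i * cs.simple j) * q⁻¹ := by group
  have hsc : SemiconjBy q (cs.simple i * cs.simple j)
      (q * (cs.simple i * cs.simple j) * q⁻¹) := by
    unfold SemiconjBy; group
  have horder : orderOf ((q * cs.simple i * q⁻¹) * (q * cs.simple j * q⁻¹)) = m := by
    rw [hconj, ← SemiconjBy.orderOf_eq q hsc, homem]
  have htarget : rhoWord (q * cs.simple i * q⁻¹) (q * cs.simple j * q⁻¹)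
      (orderOf ((q * cs.simple i * q⁻¹) * (q * cs.simple j * q⁻¹))) = blk := by
    rw [horder, hblk, rhoWord_conj]
  rw [htarget]
  refine ⟨hblk_sub, ?_⟩
  intro hsub
  have hNb : (cs.leftInvSeq b).Nodup := hb.nodup_leftInvSeq
  rw [hB] at hsub hNb
  rw [List.append_assoc] at hsub hNb
  obtain ⟨u, l₂, huv, hu, hl₂⟩ := List.sublist_append_iff.mp hsub
  obtain ⟨v, wz, hvw, hv, hw⟩ := List.sublist_append_iff.mp hl₂
  obtain ⟨hX, hrest, hdisj1⟩ := List.nodup_append'.mp hNb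
  obtain ⟨hrev, hY, hdisj2⟩ := List.nodup_append'.mp hrest
  have hu0 : u = [] := by
    cases u with
    | nil => rfl
    | cons x u' =>
      have hxX : x ∈ X := hu.subset (List.mem_cons_self)
      have hxblk : x ∈ blk := by
        rw [huv]; exact List.mem_append_left _ (List.mem_cons_self)
      exact (hdisj1 hxX (List.mem_append_left Y (List.mem_reverse.mpr hxblk))).elim
  have hw0 : wz = [] := by
    cases wz with
    | nil => rfl
    | cons x w' =>
      have hxY : x ∈ Y := hw.subset (List.mem_cons_self)
      have hxblk : x ∈ blk := by
        rw [huv, hvw]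
        exact List.mem_append_right _ (List.mem_append_right _ (List.mem_cons_self))
      exact (hdisj2 (List.mem_reverse.mpr hxblk) hxY).elim
  subst hu0 hw0
  simp only [List.nil_append, List.append_nil] at huv hvw
  subst hvw
  rw [← huv] at hv
  have hbeq : blk = blk.reverse := hv.eq_of_length (by simp)
  have h0 : (0 : ℕ) < blk.length := by omega
  have heq : blk[0]'h0 = blk[blk.length - 1 - 0]'(by omega) := by
    have h' := List.getElem_of_eq hbeq h0
    rw [List.getElem_reverse] at h'
    simpa using h'
  have := (hblk_nodup.getElem_inj_iff).mp heq
  omega
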